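/- Let f be an operation defined by a set S of standard rules admitting a definitional tree T, together with a single default rule r of the form f x1 ... xk = t with distinct variables x1,...,xk. Let R be the replacement of r, consisting of the rules obtained by instantiating r with the patterns of the exempt nodes of T. Then for any ground f-rooted pattern p and any term q: p is reduced at the root to q by the default rule r (i.e., no rule of S matches p, and q is the corresponding instance of t) if and only if p is reduced at the root to q by some rule of R. -/

import Mathlib

/-!  A formalization of constructor-based term rewriting with definitional
trees, following Antoy's definitions.  Constructor and operation symbols are
natural numbers (disjoint by construction, since terms distinguish them);
constructors are grouped into types via `ctorType`. -/

/-- A signature: constructors (with type, arity and argument types) and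
operations (with arity, argument types and result type). -/
structure Sig where
  ctorType : ℕ → ℕ
  ctorArity : ℕ → ℕ
  ctorArgTy : ℕ → ℕ → ℕ
  opArity : ℕ → ℕ
  opArgTy : ℕ → ℕ → ℕ
  opResTy : ℕ → ℕ

namespace FLP

/-- Terms: variables (name and type annotation), constructor applications and
operation applications. -/
inductive Tm where
  | var : ℕ → ℕ → Tm
  | con : ℕ → List Tm → Tm
  | op  : ℕ → List Tm → Tm

/-- A substitution maps a variable (name and type) to a term. -/
def Subst := ℕ → ℕ → Tm

/-- Applying a substitution to a term. -/
def applySubst (σ : Subst) : Tm → Tm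
  | .var v ty => σ v ty
  | .con c ts => .con c (ts.attach.map fun t => applySubst σ t.1)
  | .op f ts  => .op f (ts.attach.map fun t => applySubst σ t.1)
decreasing_by
  all_goals (have h := List.sizeOf_lt_of_mem t.2; simp at h ⊢; omega)

/-- The list of variables (name, type) occurring in a term. -/
def varsOf : Tm → List (ℕ × ℕ)
  | .var v ty => [(v, ty)]
  | .con _ ts => ts.attach.flatMap fun t => varsOf t.1
  | .op _ ts  => ts.attach.flatMap fun t => varsOf t.1
decreasing_by
  all_goals (have h := List.sizeOf_lt_of_mem t.2; simp at h ⊢; omega)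

/-- Ground terms: terms without variables. -/
inductive Ground : Tm → Prop
  | con : ∀ c ts, (∀ t ∈ ts, Ground t) → Ground (.con c ts)
  | op  : ∀ f ts, (∀ t ∈ ts, Ground t) → Ground (.op f ts)

/-- Constructor terms: built from variables and constructor symbols only. -/
inductive CTerm : Tm → Prop
  | var : ∀ v ty, CTerm (.var v ty)
  | con : ∀ c ts, (∀ t ∈ ts, CTerm t) → CTerm (.con c ts)

/-- The typing judgment for terms. -/
inductive HasTy (S : Sig) : Tm → ℕ → Prop
  | var : ∀ v ty, HasTy S (.var v ty) ty
  | con : ∀ c ts, ts.length = S.ctorArity c →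
      (∀ i (h : i < ts.length), HasTy S ts[i] (S.ctorArgTy c i)) →
      HasTy S (.con c ts) (S.ctorType c)
  | op : ∀ f ts, ts.length = S.opArity f →
      (∀ i (h : i < ts.length), HasTy S ts[i] (S.opArgTy f i)) →
      HasTy S (.op f ts) (S.opResTy f)

/-- An `f`-rooted pattern: a linear, well-typed term `f t1 ... tn` whose
arguments are constructor terms. -/
def IsPat (S : Sig) (f : ℕ) (p : Tm) : Prop :=
  (∃ ts, p = .op f ts ∧ ∀ t ∈ ts, CTerm t) ∧
  ((varsOf p).map Prod.fst).Nodup ∧ HasTy S p (S.opResTy f)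

/-- A ground `f`-rooted pattern. -/
def IsGroundPat (S : Sig) (f : ℕ) (p : Tm) : Prop :=
  IsPat S f p ∧ Ground p

/-- `q` matches `p` iff `p` is a substitution instance of `q`. -/
def Matches (q p : Tm) : Prop := ∃ σ : Subst, applySubst σ q = p

/-- `q` unifies with `e` iff they have a common instance. -/
def Unifies (q e : Tm) : Prop :=
  ∃ σ τ : Subst, applySubst σ q = applySubst τ e

/-- The substitution replacing the variable named `x` by `t`. -/
def single (x : ℕ) (t : Tm) : Subst := fun v ty =>
  if v = x then t else .var v ty

/-- The substitution mapping the variables named by `xs` to the corresponding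
terms of `ts`. -/
def substOf (xs : List ℕ) (ts : List Tm) : Subst := fun v ty =>
  match xs.findIdx? (· = v) with
  | some i => ts.getD i (.var v ty)
  | none => .var v ty

/-- Partial definitional trees: rule nodes `rule(p = r)`, exempt nodes
`exempt(p)`, and branch nodes storing their pattern, the name of the
inductive variable, and one (constructor, subtree) pair per constructor of
the type of the inductive variable. -/
inductive DTree where
  | rule : Tm → Tm → DTree
  | exempt : Tm → DTree
  | branch : Tm → ℕ → List (ℕ × DTree) → DTree

/-- The pattern of the root node of a partial definitional tree. -/
def DTree.pat : DTree → Tm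
  | .rule p _ => p
  | .exempt p => p
  | .branch p _ _ => p

/-- The patterns of the leaves of a partial definitional tree. -/
def DTree.leafPats : DTree → List Tm
  | .rule p _ => [p]
  | .exempt p => [p]
  | .branch _ _ cs => cs.attach.flatMap fun ct => ct.1.2.leafPats
decreasing_by
  all_goals (obtain ⟨⟨c', T'⟩, hm⟩ := ct;
             have h := List.sizeOf_lt_of_mem hm; simp at h ⊢; omega)

/-- The patterns (left-hand sides) of the rule nodes. -/
def DTree.rulePats : DTree → List Tm
  | .rule p _ => [p]
  | .exempt _ => []
  | .branch _ _ cs => cs.attach.flatMap fun ct => ct.1.2.rulePats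
decreasing_by
  all_goals (obtain ⟨⟨c', T'⟩, hm⟩ := ct;
             have h := List.sizeOf_lt_of_mem hm; simp at h ⊢; omega)

/-- The patterns of the exempt nodes. -/
def DTree.exemptPats : DTree → List Tm
  | .rule _ _ => []
  | .exempt p => [p]
  | .branch _ _ cs => cs.attach.flatMap fun ct => ct.1.2.exemptPats
decreasing_by
  all_goals (obtain ⟨⟨c', T'⟩, hm⟩ := ct;
             have h := List.sizeOf_lt_of_mem hm; simp at h ⊢; omega)

/-- The rules contained in the rule nodes. -/
def DTree.rules : DTree → List (Tm × Tm)
  | .rule p r => [(p, r)]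
  | .exempt _ => []
  | .branch _ _ cs => cs.attach.flatMap fun ct => ct.1.2.rules
decreasing_by
  all_goals (obtain ⟨⟨c', T'⟩, hm⟩ := ct;
             have h := List.sizeOf_lt_of_mem hm; simp at h ⊢; omega)

/-- Well-formed partial definitional trees w.r.t. a signature: at a branch
node with pattern `p` and inductive variable `x` (of type `ty`, occurring in
`p`), there is exactly one child per constructor `c` of type `ty`, whose
pattern is obtained from `p` by substituting `x` with `c` applied to fresh
pairwise distinct variables. -/
inductive WF (S : Sig) : DTree → Prop
  | rule : ∀ p r, WF S (.rule p r)
  | exempt : ∀ p, WF S (.exempt p)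
  | branch : ∀ p x ty (cs : List (ℕ × DTree)),
      (x, ty) ∈ varsOf p →
      (cs.map Prod.fst).Nodup →
      (∀ c, c ∈ cs.map Prod.fst ↔ S.ctorType c = ty) →
      (∀ ct ∈ cs, ∃ fresh : List (ℕ × ℕ),
          (fresh.map Prod.fst).Nodup ∧
          fresh.length = S.ctorArity ct.1 ∧
          (∀ i (h : i < fresh.length), fresh[i].2 = S.ctorArgTy ct.1 i) ∧
          (∀ v ∈ fresh, v.1 ∉ (varsOf p).map Prod.fst) ∧
          (Prod.snd ct).pat =
            applySubst (single x (.con ct.1 (fresh.map fun v => Tm.var v.1 v.2))) p) →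
      (∀ ct ∈ cs, WF S (Prod.snd ct)) →
      WF S (.branch p x cs)

/-- A definitional tree of the operation `f`: a well-formed partial
definitional tree whose root pattern is `f x1 ... xn` with pairwise distinct
(appropriately typed) variables. -/
def IsDTreeOf (S : Sig) (f : ℕ) (T : DTree) : Prop :=
  WF S T ∧
  ∃ xs : List (ℕ × ℕ),
    (xs.map Prod.fst).Nodup ∧
    xs.length = S.opArity f ∧
    (∀ i (h : i < xs.length), xs[i].2 = S.opArgTy f i) ∧
    T.pat = .op f (xs.map fun v => Tm.var v.1 v.2)

/-- `Subtree N T` : `N` is a node (subtree) of `T`. -/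
inductive Subtree : DTree → DTree → Prop
  | refl : ∀ T, Subtree T T
  | branch : ∀ p x cs ct N, ct ∈ cs → Subtree N (Prod.snd ct) →
      Subtree N (.branch p x cs)

/-- A tree has a rule node (somewhere, including its root). -/
inductive HasRule : DTree → Prop
  | rule : ∀ p r, HasRule (.rule p r)
  | branch : ∀ p x cs ct, ct ∈ cs → HasRule (Prod.snd ct) →
      HasRule (.branch p x cs)

/-- A definitional tree is minimal iff there is some rule node below any
branch node of the tree. -/
def Minimal (T : DTree) : Prop :=
  ∀ p x cs, Subtree (.branch p x cs) T → HasRule (.branch p x cs)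



/-! ### Auxiliary lemmas for the proof -/

section Aux

theorem Tm.indOn {P : Tm → Prop}
    (hv : ∀ v ty, P (.var v ty))
    (hc : ∀ c ts, (∀ t ∈ ts, P t) → P (.con c ts))
    (ho : ∀ f ts, (∀ t ∈ ts, P t) → P (.op f ts)) : ∀ t, P t
  | .var v ty => hv v ty
  | .con c ts => hc c ts (fun u hu => Tm.indOn hv hc ho u)
  | .op f ts => ho f ts (fun u hu => Tm.indOn hv hc ho u)
decreasing_by
  all_goals (have h := List.sizeOf_lt_of_mem hu; simp at h ⊢; omega)

@[simp] theorem applySubst_var (σ : Subst) (v ty) : applySubst σ (.var v ty) = σ v ty := by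
  rw [applySubst]

@[simp] theorem applySubst_con (σ : Subst) (c ts) :
    applySubst σ (.con c ts) = .con c (ts.map (applySubst σ)) := by
  rw [applySubst]; rw [List.attach_map_val]

@[simp] theorem applySubst_op (σ : Subst) (f ts) :
    applySubst σ (.op f ts) = .op f (ts.map (applySubst σ)) := by
  rw [applySubst]; rw [List.attach_map_val]

@[simp] theorem varsOf_var (v ty) : varsOf (.var v ty) = [(v, ty)] := by rw [varsOf]

@[simp] theorem varsOf_con (c ts) : varsOf (.con c ts) = ts.flatMap varsOf := by
  rw [varsOf, List.flatMap, List.flatMap, List.attach_map_val]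

@[simp] theorem varsOf_op (f ts) : varsOf (.op f ts) = ts.flatMap varsOf := by
  rw [varsOf, List.flatMap, List.flatMap, List.attach_map_val]

theorem applySubst_congr {σ τ : Subst} {u : Tm}
    (h : ∀ vt ∈ varsOf u, σ vt.1 vt.2 = τ vt.1 vt.2) : applySubst σ u = applySubst τ u := by
  induction u using Tm.indOn with
  | hv v ty => simpa using h (v, ty) (by simp)
  | hc c ts ih =>
      simp only [applySubst_con, Tm.con.injEq, true_and]
      rw [List.map_inj_left]
      exact fun t ht => ih t ht (fun vt hvt => h vt (by simp [List.mem_flatMap]; exact ⟨t, ht, hvt⟩))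
  | ho f ts ih =>
      simp only [applySubst_op, Tm.op.injEq, true_and]
      rw [List.map_inj_left]
      exact fun t ht => ih t ht (fun vt hvt => h vt (by simp [List.mem_flatMap]; exact ⟨t, ht, hvt⟩))

theorem eq_on_vars {σ τ : Subst} {u : Tm} (h : applySubst σ u = applySubst τ u) :
    ∀ vt ∈ varsOf u, σ vt.1 vt.2 = τ vt.1 vt.2 := by
  induction u using Tm.indOn with
  | hv v ty => intro vt hvt; simp at hvt; subst hvt; simpa using h
  | hc c ts ih =>
      intro vt hvt
      simp only [varsOf_con, List.mem_flatMap] at hvt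
      obtain ⟨t, ht, hvt⟩ := hvt
      simp only [applySubst_con, Tm.con.injEq, true_and] at h
      exact ih t ht (List.map_inj_left.mp h t ht) vt hvt
  | ho f ts ih =>
      intro vt hvt
      simp only [varsOf_op, List.mem_flatMap] at hvt
      obtain ⟨t, ht, hvt⟩ := hvt
      simp only [applySubst_op, Tm.op.injEq, true_and] at h
      exact ih t ht (List.map_inj_left.mp h t ht) vt hvt

theorem applySubst_comp (σ τ : Subst) (u : Tm) :
    applySubst σ (applySubst τ u) = applySubst (fun v ty => applySubst σ (τ v ty)) u := by
  induction u using Tm.indOn with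
  | hv v ty => rw [applySubst_var τ]; exact (applySubst_var (fun v ty => applySubst σ (τ v ty)) v ty).symm
  | hc c ts ih => simp only [applySubst_con, List.map_map, Tm.con.injEq, true_and]
                  refine (congrArg (Tm.con c) ?_).trans (applySubst_con _ c ts).symm
                  exact List.map_congr_left (fun t ht => ih t ht)
  | ho f ts ih => simp only [applySubst_op, List.map_map, Tm.op.injEq, true_and]
                  refine (congrArg (Tm.op f) ?_).trans (applySubst_op _ f ts).symm
                  exact List.map_congr_left (fun t ht => ih t ht)

theorem flatMap_congr {α β : Type*} {l : List α} {f g : α → List β}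
    (h : ∀ a ∈ l, f a = g a) : l.flatMap f = l.flatMap g := by
  rw [List.flatMap, List.flatMap]
  congr 1
  exact List.map_congr_left h

theorem varsOf_applySubst (σ : Subst) (u : Tm) :
    varsOf (applySubst σ u) = (varsOf u).flatMap (fun vt => varsOf (σ vt.1 vt.2)) := by
  induction u using Tm.indOn with
  | hv v ty => simp
  | hc c ts ih =>
      simp only [applySubst_con, varsOf_con, List.flatMap_map]
      rw [List.flatMap_assoc]
      exact flatMap_congr ih
  | ho f ts ih =>
      simp only [applySubst_op, varsOf_op, List.flatMap_map]
      rw [List.flatMap_assoc]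
      exact flatMap_congr ih

theorem applySubst_id (u : Tm) : applySubst (fun v ty => .var v ty) u = u := by
  induction u using Tm.indOn with
  | hv v ty => exact applySubst_var _ v ty
  | hc c ts ih => refine (applySubst_con _ c ts).trans (congrArg (Tm.con c) ?_)
                  conv_rhs => rw [← List.map_id ts]
                  rw [List.map_inj_left]; exact fun t ht => ih t ht
  | ho f ts ih => refine (applySubst_op _ f ts).trans (congrArg (Tm.op f) ?_)
                  conv_rhs => rw [← List.map_id ts]
                  rw [List.map_inj_left]; exact fun t ht => ih t ht

theorem findIdx?_nodup_getElem {ns : List ℕ} (h : ns.Nodup) {i : ℕ} (hi : i < ns.length) :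
    ns.findIdx? (· = ns[i]) = some i := by
  induction ns generalizing i with
  | nil => simp at hi
  | cons a l ih =>
    rcases i with _ | j
    · simp [List.findIdx?_cons]
    · have hj : j < l.length := by simpa using hi
      have hne : a ≠ l[j] := by
        intro e
        exact (List.nodup_cons.mp h).1 (e ▸ List.getElem_mem hj)
      have he : ((a :: l)[j+1]'hi) = l[j] := by simp
      rw [he, List.findIdx?_cons]
      simp [hne, ih (List.nodup_cons.mp h).2 hj]

theorem substOf_eval {xs : List (ℕ × ℕ)} (h : (xs.map Prod.fst).Nodup) {us : List Tm}
    (hl : us.length = xs.length) {i : ℕ} (hi : i < xs.length) (ty : ℕ) :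
    substOf (xs.map Prod.fst) us xs[i].1 ty = us[i]'(by omega) := by
  have h1 : (xs.map Prod.fst).findIdx? (· = xs[i].1) = some i := by
    have := findIdx?_nodup_getElem h (i := i) (by simpa using hi)
    simpa using this
  unfold substOf
  rw [h1]
  exact List.getD_eq_getElem _ _ (by omega)

/-- Extension of a substitution by bindings for a list of variable names. -/
def extend (σ : Subst) (ns : List ℕ) (ts : List Tm) : Subst := fun v ty =>
  match ns.findIdx? (· = v) with
  | some i => ts.getD i (.var v ty)
  | none => σ v ty

theorem extend_notmem (σ : Subst) (ns : List ℕ) (ts : List Tm) {v : ℕ} (hv : v ∉ ns) (ty : ℕ) :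
    extend σ ns ts v ty = σ v ty := by
  have h : ns.findIdx? (· = v) = none := by
    rw [List.findIdx?_eq_none_iff]
    intro x hx
    simp only [decide_eq_false_iff_not]
    rintro rfl; exact hv hx
  unfold extend; rw [h]

theorem extend_eval (σ : Subst) {ns : List ℕ} (h : ns.Nodup) {ts : List Tm}
    (hl : ts.length = ns.length) {i : ℕ} (hi : i < ns.length) (ty : ℕ) :
    extend σ ns ts ns[i] ty = ts[i]'(by omega) := by
  unfold extend
  rw [findIdx?_nodup_getElem h hi]
  exact List.getD_eq_getElem _ _ (by omega)

theorem ground_cterm_shape {u : Tm} (hg : Ground u) (hc : CTerm u) :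
    ∃ c ts, u = .con c ts ∧ (∀ t ∈ ts, Ground t) ∧ (∀ t ∈ ts, CTerm t) := by
  cases hc with
  | var v ty => cases hg
  | con c ts h =>
      cases hg with
      | con _ _ hg' => exact ⟨c, ts, rfl, hg', h⟩

theorem hasTy_con_inv {S : Sig} {c : ℕ} {ts : List Tm} {ty : ℕ}
    (h : HasTy S (.con c ts) ty) :
    ty = S.ctorType c ∧ ts.length = S.ctorArity c ∧
      ∀ i (hi : i < ts.length), HasTy S ts[i] (S.ctorArgTy c i) := by
  cases h with
  | con _ _ hlen hty => exact ⟨rfl, hlen, hty⟩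

theorem hasTy_op_inv {S : Sig} {f : ℕ} {ts : List Tm} {ty : ℕ}
    (h : HasTy S (.op f ts) ty) :
    ts.length = S.opArity f ∧ ∀ i (hi : i < ts.length), HasTy S ts[i] (S.opArgTy f i) := by
  cases h with
  | op _ _ hlen hty => exact ⟨hlen, hty⟩

theorem ground_op_inv {f : ℕ} {ts : List Tm} (h : Ground (.op f ts)) : ∀ t ∈ ts, Ground t := by
  cases h with | op _ _ h => exact h

theorem varsOf_conVars (c : ℕ) (fresh : List (ℕ × ℕ)) :
    varsOf (.con c (fresh.map fun v => Tm.var v.1 v.2)) = fresh := by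
  simp [List.flatMap_map]

theorem varsOf_rootPat (f : ℕ) (xs : List (ℕ × ℕ)) :
    varsOf (Tm.op f (xs.map fun v => Tm.var v.1 v.2)) = xs := by
  simp [List.flatMap_map]

/-- The substitution hypotheses carried through the tree induction. -/
def GoodSubst (S : Sig) (σ : Subst) (pat : Tm) : Prop :=
  ∀ vt ∈ varsOf pat, Ground (σ vt.1 vt.2) ∧ CTerm (σ vt.1 vt.2) ∧ HasTy S (σ vt.1 vt.2) vt.2

theorem mem_leafPats_branch {l : Tm} {p : Tm} {x : ℕ} {cs : List (ℕ × DTree)} :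
    l ∈ DTree.leafPats (.branch p x cs) ↔ ∃ ct ∈ cs, l ∈ DTree.leafPats ct.2 := by
  rw [DTree.leafPats]
  simp [List.mem_flatMap]

theorem mem_rulePats_branch {l : Tm} {p : Tm} {x : ℕ} {cs : List (ℕ × DTree)} :
    l ∈ DTree.rulePats (.branch p x cs) ↔ ∃ ct ∈ cs, l ∈ DTree.rulePats ct.2 := by
  rw [DTree.rulePats]
  simp [List.mem_flatMap]

theorem mem_exemptPats_branch {l : Tm} {p : Tm} {x : ℕ} {cs : List (ℕ × DTree)} :
    l ∈ DTree.exemptPats (.branch p x cs) ↔ ∃ ct ∈ cs, l ∈ DTree.exemptPats ct.2 := by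
  rw [DTree.exemptPats]
  simp [List.mem_flatMap]

theorem nodup_step {pat : Tm} {x c : ℕ} {fresh : List (ℕ × ℕ)}
    (hlin : ((varsOf pat).map Prod.fst).Nodup)
    (hfn : (fresh.map Prod.fst).Nodup)
    (hdisj : ∀ v ∈ fresh, v.1 ∉ (varsOf pat).map Prod.fst) :
    ((varsOf (applySubst (single x (.con c (fresh.map fun v => Tm.var v.1 v.2))) pat)).map
      Prod.fst).Nodup := by
  rw [varsOf_applySubst, List.map_flatMap]
  have hfun : ∀ vt ∈ varsOf pat,
      (varsOf (single x (.con c (fresh.map fun v => Tm.var v.1 v.2)) vt.1 vt.2)).map Prod.fst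
        = if vt.1 = x then fresh.map Prod.fst else [vt.1] := by
    intro vt _
    by_cases h : vt.1 = x
    · have hs : single x (Tm.con c (fresh.map fun v => Tm.var v.1 v.2)) vt.1 vt.2
          = Tm.con c (fresh.map fun v => Tm.var v.1 v.2) := by simp [single, h]
      rw [hs, varsOf_conVars, if_pos h]
    · simp [single, h]
  rw [flatMap_congr hfun]
  rw [List.nodup_flatMap]
  constructor
  · intro vt _
    by_cases h : vt.1 = x <;> simp [h, hfn]
  · rw [List.pairwise_iff_getElem]
    intro i j hi hj hij
    have hne : (varsOf pat)[i].1 ≠ (varsOf pat)[j].1 := by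
      have := (List.pairwise_iff_getElem.mp hlin) i j (by simpa using hi) (by simpa using hj) hij
      simpa using this
    have hmem_i : (varsOf pat)[i].1 ∈ (varsOf pat).map Prod.fst :=
      List.mem_map_of_mem (List.getElem_mem _)
    have hmem_j : (varsOf pat)[j].1 ∈ (varsOf pat).map Prod.fst :=
      List.mem_map_of_mem (List.getElem_mem _)
    simp only [Function.onFun]
    intro a ha1 ha2
    by_cases h1 : (varsOf pat)[i].1 = x <;> by_cases h2 : (varsOf pat)[j].1 = x
    · exact hne (h1.trans h2.symm)
    · rw [if_pos h1] at ha1; rw [if_neg h2] at ha2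
      simp only [List.mem_singleton] at ha2; subst ha2
      obtain ⟨w, hw, hw1⟩ := List.mem_map.mp ha1
      exact hdisj w hw (hw1 ▸ hmem_j)
    · rw [if_neg h1] at ha1; rw [if_pos h2] at ha2
      simp only [List.mem_singleton] at ha1; subst ha1
      obtain ⟨w, hw, hw1⟩ := List.mem_map.mp ha2
      exact hdisj w hw (hw1 ▸ hmem_i)
    · rw [if_neg h1] at ha1; rw [if_neg h2] at ha2
      simp only [List.mem_singleton] at ha1 ha2
      exact hne (ha1 ▸ ha2 ▸ rfl)

theorem step {S : Sig} {pat : Tm} {x ty c : ℕ} {fresh : List (ℕ × ℕ)} {σ : Subst} {ts : List Tm}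
    (hxty : (x, ty) ∈ varsOf pat)
    (hlin : ((varsOf pat).map Prod.fst).Nodup)
    (hfn : (fresh.map Prod.fst).Nodup)
    (hflen : fresh.length = S.ctorArity c)
    (hfty : ∀ i (h : i < fresh.length), fresh[i].2 = S.ctorArgTy c i)
    (hdisj : ∀ v ∈ fresh, v.1 ∉ (varsOf pat).map Prod.fst)
    (hgood : GoodSubst S σ pat)
    (hx : σ x ty = .con c ts) :
    ∃ σ' : Subst,
      applySubst σ' (applySubst (single x (.con c (fresh.map fun v => Tm.var v.1 v.2))) pat)
        = applySubst σ pat ∧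
      GoodSubst S σ' (applySubst (single x (.con c (fresh.map fun v => Tm.var v.1 v.2))) pat) := by
  obtain ⟨hg, hc, hty⟩ := hgood (x, ty) hxty
  simp only at hg hc hty
  rw [hx] at hg hc hty
  obtain ⟨-, hts_len, hts_ty⟩ := hasTy_con_inv hty
  have hts_g : ∀ t ∈ ts, Ground t := by cases hg with | con _ _ h => exact h
  have hts_c : ∀ t ∈ ts, CTerm t := by cases hc with | con _ _ h => exact h
  refine ⟨extend σ (fresh.map Prod.fst) ts, ?_, ?_⟩
  · rw [applySubst_comp]
    apply applySubst_congr
    intro vt hvt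
    by_cases hvx : vt.1 = x
    · have hvt_eq : vt = (x, ty) :=
        List.inj_on_of_nodup_map hlin hvt hxty (by simpa using hvx)
      rw [hvt_eq]
      show applySubst _ (single x _ x ty) = σ x ty
      have hsx : single x (Tm.con c (fresh.map fun v => Tm.var v.1 v.2)) x ty
          = Tm.con c (fresh.map fun v => Tm.var v.1 v.2) := by simp [single]
      rw [hsx, hx]
      simp only [applySubst_con, List.map_map, Tm.con.injEq, true_and]
      apply List.ext_getElem
      · simp [hflen, hts_len]
      · intro i hi1 hi2
        simp only [List.getElem_map, Function.comp_apply, applySubst_var]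
        have hfi : i < (fresh.map Prod.fst).length := by simpa using hi1
        have := extend_eval σ hfn (ts := ts)
          (by simp [hflen, hts_len]) hfi (fresh[i]'(by simpa using hi1)).2
        simpa using this
    · have hvm : vt.1 ∉ fresh.map Prod.fst := by
        intro hmem
        obtain ⟨w, hw, hw1⟩ := List.mem_map.mp hmem
        exact hdisj w hw (hw1 ▸ List.mem_map_of_mem (f := Prod.fst) hvt)
      have hs : single x (Tm.con c (fresh.map fun v => Tm.var v.1 v.2)) vt.1 vt.2
          = .var vt.1 vt.2 := by simp [single, hvx]
      show applySubst _ (single x _ vt.1 vt.2) = σ vt.1 vt.2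
      rw [hs, applySubst_var, extend_notmem _ _ _ hvm]
  · intro vt hvt
    rw [varsOf_applySubst] at hvt
    obtain ⟨w, hw, hvw⟩ := List.mem_flatMap.mp hvt
    by_cases hwx : w.1 = x
    · have hs : single x (Tm.con c (fresh.map fun v => Tm.var v.1 v.2)) w.1 w.2
          = Tm.con c (fresh.map fun v => Tm.var v.1 v.2) := by simp [single, hwx]
      rw [hs, varsOf_conVars] at hvw
      obtain ⟨i, hi, hvi⟩ := List.mem_iff_getElem.mp hvw
      have hins : extend σ (fresh.map Prod.fst) ts vt.1 vt.2 = ts[i]'(by omega) := by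
        have := extend_eval σ hfn (ts := ts) (by simp [hflen, hts_len])
          (i := i) (by simpa using hi) (fresh[i]'hi).2
        rw [← hvi]
        simpa using this
      simp only [hins]
      have hmem : (ts[i]'(by omega)) ∈ ts := List.getElem_mem _
      refine ⟨hts_g _ hmem, hts_c _ hmem, ?_⟩
      have h2 : vt.2 = S.ctorArgTy c i := by rw [← hvi]; exact hfty i hi
      rw [h2]
      exact hts_ty i (by omega)
    · have hs : single x (Tm.con c (fresh.map fun v => Tm.var v.1 v.2)) w.1 w.2
          = .var w.1 w.2 := by simp [single, hwx]
      rw [hs, varsOf_var] at hvw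
      simp only [List.mem_singleton] at hvw
      have hvw' : vt = w := by rw [hvw]
      subst hvw'
      have hvm : vt.1 ∉ fresh.map Prod.fst := by
        intro hmem
        obtain ⟨w', hw', hw1⟩ := List.mem_map.mp hmem
        exact hdisj w' hw' (hw1 ▸ List.mem_map_of_mem (f := Prod.fst) hw)
      simp only [extend_notmem _ _ _ hvm]
      exact hgood vt hw

theorem leaf_instance {S : Sig} {T : DTree} (hw : WF S T) :
    ∀ l ∈ T.leafPats, ∃ μ : Subst, l = applySubst μ T.pat := by
  induction hw with
  | rule p r =>
      intro l hl
      rw [DTree.leafPats] at hl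
      simp only [List.mem_singleton] at hl
      refine ⟨fun v ty => .var v ty, ?_⟩
      show l = applySubst _ p
      rw [applySubst_id, hl]
  | exempt p =>
      intro l hl
      rw [DTree.leafPats] at hl
      simp only [List.mem_singleton] at hl
      refine ⟨fun v ty => .var v ty, ?_⟩
      show l = applySubst _ p
      rw [applySubst_id, hl]
  | branch p x ty cs hx hnd hiff hfr hwf ih =>
      intro l hl
      obtain ⟨ct, hct, hl'⟩ := mem_leafPats_branch.mp hl
      obtain ⟨μ, hμ⟩ := ih ct hct l hl'
      obtain ⟨fresh, -, -, -, -, hpat⟩ := hfr ct hct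
      refine ⟨fun v ty' =>
        applySubst μ (single x (.con ct.1 (fresh.map fun v => Tm.var v.1 v.2)) v ty'), ?_⟩
      show l = applySubst _ p
      rw [← applySubst_comp, ← hpat, ← hμ]

theorem rulePats_subset {S : Sig} {T : DTree} (hw : WF S T) :
    ∀ l ∈ T.rulePats, l ∈ T.leafPats := by
  induction hw with
  | rule p r => intro l hl; rw [DTree.rulePats] at hl; rw [DTree.leafPats]; simpa using hl
  | exempt p => intro l hl; rw [DTree.rulePats] at hl; simp at hl
  | branch p x ty cs _ _ _ _ _ ih =>
      intro l hl
      obtain ⟨ct, hct, hl'⟩ := mem_rulePats_branch.mp hl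
      exact mem_leafPats_branch.mpr ⟨ct, hct, ih ct hct l hl'⟩

theorem exemptPats_subset {S : Sig} {T : DTree} (hw : WF S T) :
    ∀ l ∈ T.exemptPats, l ∈ T.leafPats := by
  induction hw with
  | rule p r => intro l hl; rw [DTree.exemptPats] at hl; simp at hl
  | exempt p => intro l hl; rw [DTree.exemptPats] at hl; rw [DTree.leafPats]; simpa using hl
  | branch p x ty cs _ _ _ _ _ ih =>
      intro l hl
      obtain ⟨ct, hct, hl'⟩ := mem_exemptPats_branch.mp hl
      exact mem_leafPats_branch.mpr ⟨ct, hct, ih ct hct l hl'⟩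

theorem leaf_cases {S : Sig} {T : DTree} (hw : WF S T) :
    ∀ l ∈ T.leafPats, l ∈ T.rulePats ∨ l ∈ T.exemptPats := by
  induction hw with
  | rule p r =>
      intro l hl
      left; rw [DTree.rulePats]; rw [DTree.leafPats] at hl; simpa using hl
  | exempt p =>
      intro l hl
      right; rw [DTree.exemptPats]; rw [DTree.leafPats] at hl; simpa using hl
  | branch p x ty cs _ _ _ _ _ ih =>
      intro l hl
      obtain ⟨ct, hct, hl'⟩ := mem_leafPats_branch.mp hl
      rcases ih ct hct l hl' with h | h
      · exact Or.inl (mem_rulePats_branch.mpr ⟨ct, hct, h⟩)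
      · exact Or.inr (mem_exemptPats_branch.mpr ⟨ct, hct, h⟩)

theorem which_child {S : Sig} {pat P u : Tm} {x ty : ℕ} {N : DTree} (hw : WF S N)
    (hNpat : N.pat = applySubst (single x u) pat)
    {l : Tm} (hl : l ∈ N.leafPats) {τ σ : Subst}
    (hm : applySubst τ l = P) (hσ : applySubst σ pat = P)
    (hxty : (x, ty) ∈ varsOf pat) :
    ∃ ρ : Subst, σ x ty = applySubst ρ u := by
  obtain ⟨μ, hμ⟩ := leaf_instance hw l hl
  rw [hNpat] at hμ
  have h1 : applySubst τ (applySubst μ (applySubst (single x u) pat)) = P := by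
    rw [← hμ]; exact hm
  rw [applySubst_comp, applySubst_comp (fun v ty => applySubst τ (μ v ty))] at h1
  have h2 := eq_on_vars (h1.trans hσ.symm) (x, ty) hxty
  simp only at h2
  have hsu : single x u x ty = u := by simp [single]
  rw [hsu] at h2
  exact ⟨_, h2.symm⟩

theorem coverage {S : Sig} {T : DTree} (hw : WF S T) :
    ∀ σ : Subst, GoodSubst S σ T.pat → ((varsOf T.pat).map Prod.fst).Nodup →
      ∃ l ∈ T.leafPats, ∃ τ : Subst, applySubst τ l = applySubst σ T.pat := by
  induction hw with
  | rule p r =>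
      intro σ _ _
      exact ⟨p, by rw [DTree.leafPats]; simp, σ, rfl⟩
  | exempt p =>
      intro σ _ _
      exact ⟨p, by rw [DTree.leafPats]; simp, σ, rfl⟩
  | branch p x ty cs hx hnd hiff hfr hwf ih =>
      intro σ hgood hlin
      simp only [DTree.pat] at hgood hlin ⊢
      obtain ⟨hg, hc, hty⟩ := hgood (x, ty) hx
      simp only at hg hc hty
      obtain ⟨c, ts, hcon, hts_g, hts_c⟩ := ground_cterm_shape hg hc
      have hcty' : S.ctorType c = ty := by
        have := hasTy_con_inv (hcon ▸ hty)
        exact this.1.symm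
      obtain ⟨ct, hct, hcteq⟩ : ∃ ct ∈ cs, ct.1 = c := by
        have hmem : c ∈ cs.map Prod.fst := (hiff c).mpr hcty'
        obtain ⟨ct, hct, h⟩ := List.mem_map.mp hmem
        exact ⟨ct, hct, h⟩
      subst hcteq
      obtain ⟨fresh, hfn, hflen, hfty, hdisj, hpat⟩ := hfr ct hct
      obtain ⟨σ', hσ', hgood'⟩ := step hx hlin hfn hflen hfty hdisj hgood hcon
      have hlin' := nodup_step (x := x) (c := ct.1) hlin hfn hdisj
      rw [← hpat] at hσ' hgood' hlin'
      obtain ⟨l, hl, τ, hτ⟩ := ih ct hct σ' hgood' hlin'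
      exact ⟨l, mem_leafPats_branch.mpr ⟨ct, hct, hl⟩, τ, by rw [hτ, hσ']⟩

theorem exclusive {S : Sig} {T : DTree} (hw : WF S T) :
    ∀ σ : Subst, GoodSubst S σ T.pat → ((varsOf T.pat).map Prod.fst).Nodup →
      ∀ l1 ∈ T.rulePats, ∀ l2 ∈ T.exemptPats,
        Matches l1 (applySubst σ T.pat) → Matches l2 (applySubst σ T.pat) → False := by
  induction hw with
  | rule p r =>
      intro σ _ _ l1 _ l2 h2 _ _
      rw [DTree.exemptPats] at h2; simp at h2
  | exempt p =>
      intro σ _ _ l1 h1 l2 _ _ _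
      rw [DTree.rulePats] at h1; simp at h1
  | branch p x ty cs hx hnd hiff hfr hwf ih =>
      intro σ hgood hlin l1 h1 l2 h2 hm1 hm2
      simp only [DTree.pat] at hgood hlin hm1 hm2
      obtain ⟨ct1, hct1, h1'⟩ := mem_rulePats_branch.mp h1
      obtain ⟨ct2, hct2, h2'⟩ := mem_exemptPats_branch.mp h2
      obtain ⟨τ1, hτ1⟩ := hm1
      obtain ⟨τ2, hτ2⟩ := hm2
      obtain ⟨hg, hc, hty⟩ := hgood (x, ty) hx
      simp only at hg hc hty
      obtain ⟨c, ts, hcon, hts_g, hts_c⟩ := ground_cterm_shape hg hc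
      obtain ⟨fresh1, hfn1, hflen1, hfty1, hdisj1, hpat1⟩ := hfr ct1 hct1
      obtain ⟨fresh2, hfn2, hflen2, hfty2, hdisj2, hpat2⟩ := hfr ct2 hct2
      obtain ⟨ρ1, hρ1⟩ := which_child (hwf ct1 hct1) hpat1
        (rulePats_subset (hwf ct1 hct1) l1 h1') hτ1 rfl hx
      obtain ⟨ρ2, hρ2⟩ := which_child (hwf ct2 hct2) hpat2
        (exemptPats_subset (hwf ct2 hct2) l2 h2') hτ2 rfl hx
      rw [hcon] at hρ1 hρ2
      simp only [applySubst_con, Tm.con.injEq] at hρ1 hρ2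
      have hc1 : ct1.1 = c := hρ1.1.symm
      have hc2 : ct2.1 = c := hρ2.1.symm
      have hct12 : ct1 = ct2 := List.inj_on_of_nodup_map hnd hct1 hct2 (by rw [hc1, hc2])
      subst hct12
      subst hc1
      obtain ⟨σ', hσ', hgood'⟩ := step hx hlin hfn1 hflen1 hfty1 hdisj1 hgood hcon
      have hlin' := nodup_step (x := x) (c := ct1.1) hlin hfn1 hdisj1
      rw [← hpat1] at hσ' hgood' hlin'
      exact ih ct1 hct1 σ' hgood' hlin' l1 h1' l2 h2'
        ⟨τ1, by rw [hσ']; exact hτ1⟩ ⟨τ2, by rw [hσ']; exact hτ2⟩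

end Aux


/-- Correctness of the replacement: a ground `f`-rooted pattern
`p` is reduced at the root to `q` by the default rule `f x1...xk = t` (i.e.,
no standard rule pattern of the definitional tree `T` matches `p` and `q` is
the corresponding instance of `t`) iff `p` is reduced at the root to `q` by
some replacement rule, i.e., by the instance of the default rule by the
substitution determined by the pattern of some exempt node of `T`. -/
theorem replacement_correct (S : Sig) (f : ℕ) (T : DTree)
    (hT : IsDTreeOf S f T)
    (xs : List (ℕ × ℕ)) (t : Tm)
    (hroot : T.pat = .op f (xs.map fun v => Tm.var v.1 v.2))
    (hvars : ∀ v ∈ varsOf t, v ∈ xs)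
    (p q : Tm) (hp : IsGroundPat S f p) :
    ((∀ l ∈ T.rulePats, ¬ Matches l p) ∧
      ∃ σ : Subst, applySubst σ T.pat = p ∧ q = applySubst σ t)
    ↔
    (∃ ep ∈ T.exemptPats, ∃ us, ep = .op f us ∧
      ∃ σ : Subst, applySubst σ ep = p ∧
        q = applySubst σ (applySubst (substOf (xs.map Prod.fst) us) t)) := by
  obtain ⟨hw, xs', hnd', hlen', hty', hroot'⟩ := hT
  have hinj : Function.Injective (fun v : ℕ × ℕ => Tm.var v.1 v.2) := by
    rintro ⟨a1, a2⟩ ⟨b1, b2⟩ h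
    simpa [Prod.ext_iff] using h
  have hxs : xs = xs' := by
    rw [hroot] at hroot'
    injection hroot' with _ h
    exact List.map_injective_iff.mpr hinj h
  subst hxs
  have hvT : varsOf T.pat = xs := by rw [hroot]; exact varsOf_rootPat f xs
  have hlinT : ((varsOf T.pat).map Prod.fst).Nodup := by rw [hvT]; exact hnd'
  obtain ⟨⟨⟨ps, hpe, hpc⟩, hplin, hpty⟩, hpg⟩ := hp
  subst hpe
  obtain ⟨hps_len, hps_ty⟩ := hasTy_op_inv hpty
  have hps_g := ground_op_inv hpg
  have hlen_xp : xs.length = ps.length := by rw [hlen', hps_len]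
  -- any substitution matching the root pattern onto `p` is good
  have key : ∀ σ : Subst, applySubst σ T.pat = .op f ps → GoodSubst S σ T.pat := by
    intro σ hσ
    rw [hroot] at hσ
    simp only [applySubst_op, List.map_map] at hσ
    have hcomp : xs.map (applySubst σ ∘ fun v => Tm.var v.1 v.2)
        = xs.map (fun v => σ v.1 v.2) := by simp [Function.comp]
    rw [hcomp] at hσ
    injection hσ with _ hσ2
    intro vt hvt
    rw [hvT] at hvt
    obtain ⟨i, hi, hvi⟩ := List.mem_iff_getElem.mp hvt
    have hσi : σ vt.1 vt.2 = ps[i]'(by omega) := by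
      have h3 := List.getElem_of_eq hσ2 (i := i) (by simpa using hi)
      rw [← hvi]
      simpa using h3
    rw [hσi]
    have hmem : (ps[i]'(by omega)) ∈ ps := List.getElem_mem _
    refine ⟨hps_g _ hmem, hpc _ hmem, ?_⟩
    have h2 : vt.2 = S.opArgTy f i := by rw [← hvi]; exact hty' i hi
    rw [h2]
    exact hps_ty i (by omega)
  -- the computation of the replaced right-hand side
  have qkey : ∀ (σ' μ : Subst) (us : List Tm), us = xs.map (fun v => μ v.1 v.2) →
      applySubst σ' (applySubst (substOf (xs.map Prod.fst) us) t)
        = applySubst (fun v ty => applySubst σ' (μ v ty)) t := by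
    intro σ' μ us hus
    subst hus
    rw [applySubst_comp]
    apply applySubst_congr
    intro vt hvt
    obtain ⟨i, hi, hvi⟩ := List.mem_iff_getElem.mp (hvars vt hvt)
    have h1 : substOf (xs.map Prod.fst) (xs.map fun v => μ v.1 v.2) vt.1 vt.2
        = (xs.map fun v => μ v.1 v.2)[i]'(by simpa using hi) := by
      rw [← hvi]
      exact substOf_eval hnd' (by simp) hi xs[i].2
    simp only [h1, List.getElem_map]
    rw [← hvi]
  constructor
  · rintro ⟨hnorule, σ, hσ, hq⟩
    have hgood := key σ hσ
    obtain ⟨l, hl, τ, hτ⟩ := coverage hw σ hgood hlinT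
    rw [hσ] at hτ
    rcases leaf_cases hw l hl with hrule | hex
    · exact absurd ⟨τ, hτ⟩ (hnorule l hrule)
    · obtain ⟨μ, hμ⟩ := leaf_instance hw l (exemptPats_subset hw l hex)
      refine ⟨l, hex, xs.map (fun v => μ v.1 v.2), ?_, τ, hτ, ?_⟩
      · rw [hμ, hroot]
        simp [List.map_map, Function.comp]
      · rw [qkey τ μ _ rfl, hq]
        apply applySubst_congr
        intro vt hvt
        have hvT' : vt ∈ varsOf T.pat := by rw [hvT]; exact hvars vt hvt
        have hcmp : applySubst (fun v ty => applySubst τ (μ v ty)) T.pat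
            = applySubst σ T.pat := by
          rw [← applySubst_comp, ← hμ, hτ, hσ]
        exact (eq_on_vars hcmp vt hvT').symm
  · rintro ⟨ep, hepmem, us, hepus, σ', hσ', hq⟩
    obtain ⟨μ, hμ⟩ := leaf_instance hw ep (exemptPats_subset hw ep hepmem)
    refine ⟨?_, fun v ty => applySubst σ' (μ v ty), ?_, ?_⟩
    case refine_2 =>
      rw [← applySubst_comp, ← hμ]
      exact hσ'
    all_goals
      have hσ : applySubst (fun v ty => applySubst σ' (μ v ty)) T.pat = .op f ps := by
        rw [← applySubst_comp, ← hμ]; exact hσ'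
    · -- no standard rule matches
      intro l hlrule hm
      obtain ⟨τ, hτ⟩ := hm
      exact exclusive hw _ (key _ hσ) hlinT l hlrule ep hepmem
        ⟨τ, by rw [hσ]; exact hτ⟩ ⟨σ', by rw [hσ]; exact hσ'⟩
    · -- the instances of the right-hand side agree
      have hus : us = xs.map (fun v => μ v.1 v.2) := by
        rw [hμ, hroot] at hepus
        simp only [applySubst_op, List.map_map] at hepus
        injection hepus with _ h
        rw [← h]
        simp [Function.comp]
      rw [hq, qkey σ' μ us hus]

end FLP
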